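/- Let a > 0 and σ > 0 with a·σ < π/2. Then every complex number λ satisfying λ + a·exp(−σ·λ) = 0 has strictly negative real part. -/

import Mathlib

open Real Complex

theorem stmt_1 (a σ : ℝ) (ha : 0 < a) (hσ : 0 < σ) (hstab : a * σ < Real.pi / 2)
    (lam : ℂ) (hroot : lam + (a : ℂ) * Complex.exp (-(σ : ℂ) * lam) = 0) :
    lam.re < 0 := by
  by_contra h
  push_neg at h
  have h1 : lam = -((a : ℂ) * Complex.exp (-(σ : ℂ) * lam)) := by
    linear_combination hroot
  have hre : (-(σ : ℂ) * lam).re = -(σ * lam.re) := by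
    simp only [Complex.mul_re, Complex.neg_re, Complex.neg_im, Complex.ofReal_re,
      Complex.ofReal_im]
    ring
  have him : (-(σ : ℂ) * lam).im = -(σ * lam.im) := by
    simp only [Complex.mul_im, Complex.neg_re, Complex.neg_im, Complex.ofReal_re,
      Complex.ofReal_im]
    ring
  have habs : ‖lam‖ = a * Real.exp (-(σ * lam.re)) := by
    conv_lhs => rw [h1]
    rw [norm_neg, norm_mul, Complex.norm_exp, hre, Complex.norm_real, Real.norm_eq_abs, abs_of_pos ha]
  have hexp_le : Real.exp (-(σ * lam.re)) ≤ 1 := by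
    rw [Real.exp_le_one_iff]
    nlinarith
  have habs_le : ‖lam‖ ≤ a := by
    rw [habs]; nlinarith [Real.exp_pos (-(σ * lam.re))]
  have him_le : |lam.im| ≤ a := le_trans (Complex.abs_im_le_norm lam) habs_le
  have hσy : |σ * lam.im| < Real.pi / 2 := by
    rw [abs_mul, abs_of_pos hσ]
    calc σ * |lam.im| ≤ σ * a := by nlinarith
      _ < Real.pi / 2 := by nlinarith
  have hcos : 0 < Real.cos (-(σ * lam.im)) := by
    obtain ⟨h1', h2'⟩ := abs_lt.mp hσy
    exact Real.cos_pos_of_mem_Ioo ⟨by linarith, by linarith⟩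
  have hre_eq : lam.re = -(a * (Real.exp (-(σ * lam.re)) * Real.cos (-(σ * lam.im)))) := by
    conv_lhs => rw [h1]
    rw [Complex.neg_re, Complex.mul_re]
    rw [Complex.exp_re, Complex.exp_im, hre, him]
    simp only [Complex.ofReal_re, Complex.ofReal_im]
    ring
  nlinarith [mul_pos (mul_pos ha (Real.exp_pos (-(σ * lam.re)))) hcos]
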